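/- Let N ≥ 1 and n ≥ 1. Then every n-outcome POVM M on (ℂ²)^{⊗N} ≅ ℂ^{2^N} satisfies R_{Sep(N)}(M) ≤ 2^{(3N/2) − 1} − 1, where Sep(N) is the set of n-outcome POVMs all of whose effects are N-qubit separable. -/

import Mathlib

open scoped BigOperators ComplexOrder

/-- A POVM with outcome set `κ` on the Hilbert space with orthonormal basis indexed by `ι`:
a tuple of positive semidefinite matrices summing to `1`. -/
def IsPOVM {ι κ : Type*} [Fintype ι] [DecidableEq ι] [Fintype κ]
    (M : κ → Matrix ι ι ℂ) : Prop :=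
  (∀ k, (M k).PosSemidef) ∧ ∑ k, M k = 1

/-- An elementary product operator on `N` qubits: an `N`-fold Kronecker product
`A_1 ⊗ ⋯ ⊗ A_N` of positive semidefinite `2×2` matrices. -/
def IsProdPSD {N : ℕ} (X : Matrix (Fin N → Fin 2) (Fin N → Fin 2) ℂ) : Prop :=
  ∃ A : Fin N → Matrix (Fin 2) (Fin 2) ℂ,
    (∀ t, (A t).PosSemidef) ∧ ∀ x y, X x y = ∏ t, A t (x t) (y t)

/-- An `N`-qubit separable operator: a finite sum of elementary product operators. -/
def IsNSep {N : ℕ} (X : Matrix (Fin N → Fin 2) (Fin N → Fin 2) ℂ) : Prop :=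
  ∃ (k : ℕ) (Y : Fin k → Matrix (Fin N → Fin 2) (Fin N → Fin 2) ℂ),
    (∀ i, IsProdPSD (Y i)) ∧ X = ∑ i, Y i

/-- The set of `n`-outcome separable POVMs on `N` qubits. -/
def SepPOVM (N n : ℕ) : Set (Fin n → Matrix (Fin N → Fin 2) (Fin N → Fin 2) ℂ) :=
  {M | IsPOVM M ∧ ∀ i, IsNSep (M i)}

/-- The set of admissible noise parameters `s ≥ 0` for which some POVM `N` makes
`(M + s N)/(1+s)` a member of `F`. -/
def robustnessSet {ι κ : Type*} [Fintype ι] [DecidableEq ι] [Fintype κ]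
    (F : Set (κ → Matrix ι ι ℂ)) (M : κ → Matrix ι ι ℂ) : Set ℝ :=
  {s : ℝ | 0 ≤ s ∧ ∃ N, IsPOVM N ∧
    (fun k => (1 + s)⁻¹ • (M k + s • N k)) ∈ F}

/-- The robustness of `M` with respect to `F`. -/
noncomputable def robustness {ι κ : Type*} [Fintype ι] [DecidableEq ι] [Fintype κ]
    (F : Set (κ → Matrix ι ι ℂ)) (M : κ → Matrix ι ι ℂ) : ℝ :=
  sInf (robustnessSet F M)

/-! ### Auxiliary lemmas -/

open Matrix

/-- The sign function `(a, b) ↦ (-1)^{ab}` on bits. -/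
def sgnAux : Fin 2 → Fin 2 → ℂ := fun a b => if a = 1 ∧ b = 1 then -1 else 1

lemma sgnAux_star (a b : Fin 2) : star (sgnAux a b) = sgnAux a b := by
  unfold sgnAux; split_ifs <;> simp

lemma sgnAux_sum (x y : Fin 2) :
    ∑ a : Fin 2, sgnAux a x * sgnAux a y = if x = y then (2:ℂ) else 0 := by
  fin_cases x <;> fin_cases y <;> simp [sgnAux, Fin.sum_univ_two] <;> norm_num

lemma sgnAux_zero (b : Fin 2) : sgnAux 0 b = 1 := by
  unfold sgnAux; simp

/-- The `±1`-valued character `x ↦ (-1)^{s·x}` on the hypercube. -/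
def uFun {N : ℕ} (s x : Fin N → Fin 2) : ℂ := ∏ t, sgnAux (s t) (x t)

lemma uFun_star {N : ℕ} (s x : Fin N → Fin 2) : star (uFun s x) = uFun s x := by
  unfold uFun
  rw [star_prod]
  exact Finset.prod_congr rfl fun t _ => sgnAux_star _ _

lemma uFun_sum {N : ℕ} (x y : Fin N → Fin 2) :
    (∑ s : Fin N → Fin 2, uFun s x * uFun s y) = if x = y then (2:ℂ)^N else 0 := by
  have h1 : ∀ s : Fin N → Fin 2, uFun s x * uFun s y
      = ∏ t, (sgnAux (s t) (x t) * sgnAux (s t) (y t)) := by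
    intro s; unfold uFun; rw [← Finset.prod_mul_distrib]
  calc (∑ s : Fin N → Fin 2, uFun s x * uFun s y)
      = ∑ s : Fin N → Fin 2, ∏ t, (sgnAux (s t) (x t) * sgnAux (s t) (y t)) :=
        Finset.sum_congr rfl fun s _ => h1 s
    _ = ∏ t, ∑ a : Fin 2, sgnAux a (x t) * sgnAux a (y t) :=
        (Fintype.prod_sum fun t a => sgnAux a (x t) * sgnAux a (y t)).symm
    _ = ∏ t, (if x t = y t then (2:ℂ) else 0) :=
        Finset.prod_congr rfl fun t _ => sgnAux_sum _ _
    _ = if x = y then (2:ℂ)^N else 0 := by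
        by_cases hxy : x = y
        · subst hxy; simp
        · rw [if_neg hxy]
          obtain ⟨t, ht⟩ := Function.ne_iff.mp hxy
          exact Finset.prod_eq_zero (Finset.mem_univ t) (if_neg ht)

/-- A positive semidefinite matrix on `N` qubits is dominated by `2^N` times its
diagonal part: the averaging of `B` over conjugation by diagonal sign matrices. -/
lemma psd_big_smul_diag_sub {N : ℕ} {B : Matrix (Fin N → Fin 2) (Fin N → Fin 2) ℂ}
    (hB : B.PosSemidef) :
    (((2:ℂ)^N) • Matrix.diagonal (fun x => B x x) - B).PosSemidef := by
  classical
  set C : (Fin N → Fin 2) → Matrix (Fin N → Fin 2) (Fin N → Fin 2) ℂ :=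
    fun s => Matrix.of fun x y => uFun s x * B x y * uFun s y with hC
  have hCpsd : ∀ s, (C s).PosSemidef := by
    intro s
    have h := hB.conjTranspose_mul_mul_same (Matrix.diagonal (uFun s))
    have heq : (Matrix.diagonal (uFun s))ᴴ * B * Matrix.diagonal (uFun s) = C s := by
      ext x y
      simp only [hC, Matrix.diagonal_conjTranspose, Matrix.mul_diagonal, Matrix.diagonal_mul,
        Matrix.of_apply, Pi.star_apply]
      rw [uFun_star]
    rwa [heq] at h
  have h0 : C (fun _ => 0) = B := by
    ext x y
    simp [hC, uFun, sgnAux_zero]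
  have hdec : ((2:ℂ)^N) • Matrix.diagonal (fun x => B x x) - B
      = ∑ s ∈ Finset.univ.erase (fun _ => (0 : Fin 2)), C s := by
    rw [Finset.sum_erase_eq_sub (Finset.mem_univ _), h0]
    congr 1
    ext x y
    rw [Matrix.sum_apply]
    have hpull : ∑ s : Fin N → Fin 2, C s x y
        = B x y * ∑ s : Fin N → Fin 2, uFun s x * uFun s y := by
      rw [Finset.mul_sum]
      exact Finset.sum_congr rfl fun s _ => by simp only [hC, Matrix.of_apply]; ring
    rw [hpull, uFun_sum]
    by_cases hxy : x = y
    · subst hxy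
      simp [Matrix.smul_apply, Matrix.diagonal_apply_eq, smul_eq_mul, mul_comm]
    · simp [Matrix.smul_apply, Matrix.diagonal_apply_ne _ hxy, hxy]
  rw [hdec]
  exact Finset.sum_induction C Matrix.PosSemidef (fun a b ha hb => ha.add hb)
    Matrix.PosSemidef.zero (fun s _ => hCpsd s)

lemma real_smul_matrix {ι κ : Type*} (r : ℝ) (X : Matrix ι κ ℂ) :
    r • X = ((r : ℂ)) • X := by
  ext x y; simp [Matrix.smul_apply, Complex.real_smul]

lemma smul_posSemidef {ι : Type*} [Fintype ι] {X : Matrix ι ι ℂ} (hX : X.PosSemidef)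
    {c : ℝ} (hc : 0 ≤ c) : ((c : ℂ) • X).PosSemidef := by
  refine Matrix.PosSemidef.of_dotProduct_mulVec_nonneg ?_ ?_
  · unfold Matrix.IsHermitian
    rw [Matrix.conjTranspose_smul, hX.1]
    congr 1
    simp
  · intro v
    rw [Matrix.smul_mulVec, dotProduct_smul, smul_eq_mul]
    exact mul_nonneg (by exact_mod_cast hc) (hX.dotProduct_mulVec_nonneg v)

lemma psd_diag_entry {ι : Type*} [Fintype ι] [DecidableEq ι] {B : Matrix ι ι ℂ}
    (hB : B.PosSemidef) (x : ι) : 0 ≤ B x x := by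
  have h := hB.dotProduct_mulVec_nonneg (Pi.single x 1)
  simpa [dotProduct, Pi.single_apply, apply_ite] using h

/-- A rank-one diagonal operator `c·|x₀⟩⟨x₀|` in the computational basis
is an elementary product operator. -/
lemma isProdPSD_single {N : ℕ} (hN : 1 ≤ N) (x0 : Fin N → Fin 2) {c : ℂ} (hc : 0 ≤ c) :
    IsProdPSD (Matrix.diagonal (fun x => if x = x0 then c else 0)) := by
  refine ⟨fun t => Matrix.diagonal
      (fun a => if a = x0 t then (if t = (⟨0, hN⟩ : Fin N) then c else 1) else 0), ?_, ?_⟩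
  · intro t
    refine Matrix.PosSemidef.diagonal fun a => ?_
    by_cases h1 : a = x0 t
    · by_cases h2 : t = (⟨0, hN⟩ : Fin N) <;> simp [h1, h2, hc]
    · simp [h1]
  · intro x y
    by_cases hxy : x = y
    · subst hxy
      by_cases hx : x = x0
      · subst hx
        have hfac : ∀ t : Fin N,
            (Matrix.diagonal fun a => if a = x t then (if t = (⟨0, hN⟩ : Fin N) then c else 1)
              else 0) (x t) (x t) = (if t = (⟨0, hN⟩ : Fin N) then c else 1) := by
          intro t; simp
        rw [Finset.prod_congr rfl fun t _ => hfac t,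
          Finset.prod_ite_eq' Finset.univ (⟨0, hN⟩ : Fin N) (fun _ => c)]
        simp
      · obtain ⟨t, ht⟩ := Function.ne_iff.mp hx
        rw [Matrix.diagonal_apply_eq, if_neg hx]
        symm
        refine Finset.prod_eq_zero (Finset.mem_univ t) ?_
        simp [if_neg ht]
    · obtain ⟨t, ht⟩ := Function.ne_iff.mp hxy
      rw [Matrix.diagonal_apply_ne _ hxy]
      symm
      exact Finset.prod_eq_zero (Finset.mem_univ t) (Matrix.diagonal_apply_ne _ ht)

/-- A diagonal matrix with nonnegative entries is `N`-qubit separable. -/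
lemma isNSep_diagonal {N : ℕ} (hN : 1 ≤ N) {f : (Fin N → Fin 2) → ℂ} (hf : ∀ x, 0 ≤ f x) :
    IsNSep (Matrix.diagonal f) := by
  let e := (Fintype.equivFin (Fin N → Fin 2)).symm
  refine ⟨Fintype.card (Fin N → Fin 2),
    fun i => Matrix.diagonal (fun x => if x = e i then f (e i) else 0),
    fun i => isProdPSD_single hN (e i) (hf (e i)), ?_⟩
  ext x y
  rw [Matrix.sum_apply]
  by_cases hxy : x = y
  · subst hxy
    rw [Matrix.diagonal_apply_eq f x]
    have h1 : ∀ i, (Matrix.diagonal fun z => if z = e i then f (e i) else 0) x x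
        = if x = e i then f (e i) else 0 := fun i => Matrix.diagonal_apply_eq _ _
    rw [Finset.sum_congr rfl fun i _ => h1 i]
    have h2 : ∑ i, (if x = e i then f (e i) else 0)
        = ∑ z : Fin N → Fin 2, (if x = z then f z else 0) :=
      Equiv.sum_comp e (fun z => if x = z then f z else 0)
    rw [h2]
    simp
  · rw [Matrix.diagonal_apply_ne f hxy]
    exact (Finset.sum_eq_zero fun i _ => Matrix.diagonal_apply_ne _ hxy).symm

/-- Every positive semidefinite operator on one qubit is separable. -/
lemma isNSep_of_psd_one {X : Matrix (Fin 1 → Fin 2) (Fin 1 → Fin 2) ℂ} (hX : X.PosSemidef) :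
    IsNSep X := by
  refine ⟨1, fun _ => X, fun i => ?_, by simp⟩
  refine ⟨fun _ => X.submatrix (fun a (_ : Fin 1) => a) (fun a (_ : Fin 1) => a),
    fun t => hX.submatrix _, ?_⟩
  intro x y
  rw [Fin.prod_univ_one]
  simp only [Matrix.submatrix_apply]
  have hx : (fun (_ : Fin 1) => x 0) = x := by
    funext t; rw [Subsingleton.elim t 0]
  have hy : (fun (_ : Fin 1) => y 0) = y := by
    funext t; rw [Subsingleton.elim t 0]
  rw [hx, hy]

/-- Every `n`-outcome POVM on `N` qubits has robustness at most `2^{3N/2 − 1} − 1` with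
respect to separable POVMs. -/
theorem robustness_sep_qubits_le (N n : ℕ) (hN : 1 ≤ N) (hn : 1 ≤ n)
    (M : Fin n → Matrix (Fin N → Fin 2) (Fin N → Fin 2) ℂ) (hM : IsPOVM M) :
    robustness (SepPOVM N n) M ≤ (2 : ℝ) ^ ((3 * (N : ℝ)) / 2 - 1) - 1 := by
  classical
  have hBdd : BddBelow (robustnessSet (SepPOVM N n) M) := ⟨0, fun x hx => hx.1⟩
  rcases Nat.lt_or_ge N 2 with hN2 | hN2
  · -- `N = 1`: every POVM is already separable.
    interval_cases N
    have h0 : (0:ℝ) ∈ robustnessSet (SepPOVM 1 n) M := by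
      refine ⟨le_refl 0, M, hM, ?_⟩
      have hid : (fun k => (1 + (0:ℝ))⁻¹ • (M k + (0:ℝ) • M k)) = M := by
        funext k; simp
      rw [hid]
      exact ⟨hM, fun i => isNSep_of_psd_one (hM.1 i)⟩
    have h1 : robustness (SepPOVM 1 n) M ≤ 0 := csInf_le hBdd h0
    have h2 : (1:ℝ) ≤ (2:ℝ) ^ ((3 * ((1:ℕ):ℝ)) / 2 - 1) := by
      rw [show ((3 * ((1:ℕ):ℝ)) / 2 - 1) = (1/2 : ℝ) by norm_num]
      calc (1:ℝ) = (2:ℝ) ^ (0:ℝ) := (Real.rpow_zero 2).symm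
        _ ≤ (2:ℝ) ^ (1/2:ℝ) := Real.rpow_le_rpow_of_exponent_le one_le_two (by norm_num)
    linarith
  · -- `N ≥ 2`: mix with the diagonal-part noise.
    set s : ℝ := 2 ^ N - 1 with hs
    have h4 : (4:ℝ) ≤ 2 ^ N := by
      calc (4:ℝ) = 2 ^ 2 := by norm_num
        _ ≤ 2 ^ N := pow_le_pow_right₀ one_le_two hN2
    have hspos : (1:ℝ) ≤ s := by rw [hs]; linarith
    have hsne : s ≠ 0 := by linarith
    have h1s : 1 + s = (2:ℝ) ^ N := by rw [hs]; ring
    have h2Nne : ((2:ℝ) ^ N) ≠ 0 := by positivity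
    set D : Fin n → Matrix (Fin N → Fin 2) (Fin N → Fin 2) ℂ :=
      fun k => Matrix.diagonal (fun x => M k x x) with hD
    have hDsum : ∑ k, D k = 1 := by
      have h1 : ∑ k, D k = Matrix.diagonal (fun x => (∑ k, M k) x x) := by
        ext x y
        rw [Matrix.sum_apply]
        by_cases hxy : x = y
        · subst hxy
          simp [hD, Matrix.diagonal_apply_eq, Matrix.sum_apply]
        · rw [Matrix.diagonal_apply_ne _ hxy]
          exact Finset.sum_eq_zero fun k _ => Matrix.diagonal_apply_ne _ hxy
      rw [h1, hM.2]
      ext x y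
      by_cases hxy : x = y
      · subst hxy; rw [Matrix.diagonal_apply_eq]
      · rw [Matrix.diagonal_apply_ne _ hxy, Matrix.one_apply_ne hxy]
    have hDpsd : ∀ k, (D k).PosSemidef :=
      fun k => Matrix.PosSemidef.diagonal fun x => psd_diag_entry (hM.1 k) x
    set NN : Fin n → Matrix (Fin N → Fin 2) (Fin N → Fin 2) ℂ :=
      fun k => s⁻¹ • (((2:ℝ)^N) • D k - M k) with hNN
    have hNNeq : ∀ k, NN k = ((s⁻¹ : ℝ) : ℂ) • (((2:ℂ)^N) • D k - M k) := by
      intro k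
      rw [hNN]
      simp only []
      rw [real_smul_matrix, real_smul_matrix]
      norm_num
    have hNNpsd : ∀ k, (NN k).PosSemidef := by
      intro k
      rw [hNNeq k]
      exact smul_posSemidef (psd_big_smul_diag_sub (hM.1 k)) (by positivity)
    have hNNsum : ∑ k, NN k = 1 := by
      have h1 : ∑ k, NN k = s⁻¹ • (((2:ℝ)^N) • ∑ k, D k - ∑ k, M k) := by
        rw [hNN]
        rw [← Finset.smul_sum, Finset.sum_sub_distrib, ← Finset.smul_sum]
      rw [h1, hDsum, hM.2]
      have h2 : ((2:ℝ)^N) • (1 : Matrix (Fin N → Fin 2) (Fin N → Fin 2) ℂ) - 1 = s • 1 := by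
        rw [hs]
        rw [sub_smul, one_smul]
      rw [h2, smul_smul, inv_mul_cancel₀ hsne, one_smul]
    have hmem : s ∈ robustnessSet (SepPOVM N n) M := by
      refine ⟨by linarith, NN, ⟨hNNpsd, hNNsum⟩, ?_⟩
      have key : (fun k => (1 + s)⁻¹ • (M k + s • NN k)) = D := by
        funext k
        have h3 : s • NN k = ((2:ℝ)^N) • D k - M k := by
          rw [hNN]
          simp only []
          rw [smul_smul, mul_inv_cancel₀ hsne, one_smul]
        rw [h3, h1s]
        have h4 : M k + (((2:ℝ)^N) • D k - M k) = ((2:ℝ)^N) • D k := by abel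
        rw [h4, smul_smul, inv_mul_cancel₀ h2Nne, one_smul]
      rw [key]
      refine ⟨⟨hDpsd, hDsum⟩, fun i => ?_⟩
      exact isNSep_diagonal hN fun x => psd_diag_entry (hM.1 i) x
    have hle : robustness (SepPOVM N n) M ≤ s := csInf_le hBdd hmem
    have hsle : s ≤ (2 : ℝ) ^ ((3 * (N : ℝ)) / 2 - 1) - 1 := by
      have h2N : (2:ℝ) ^ N = (2:ℝ) ^ ((N:ℝ)) := (Real.rpow_natCast 2 N).symm
      have hexp : (2:ℝ) ^ ((N:ℝ)) ≤ (2:ℝ) ^ ((3 * (N:ℝ)) / 2 - 1) := by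
        apply Real.rpow_le_rpow_of_exponent_le one_le_two
        have : (2:ℝ) ≤ (N:ℝ) := by exact_mod_cast hN2
        linarith
      rw [hs, h2N]
      linarith
    linarith
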